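/- No finite field satisfies the strong uncertainty principle: for every prime power q there exist infinitely many primes p (in particular with p ∤ q) such that μ(F_q,p) ≤ p. -/

import Mathlib

open Polynomial

/-- The ring R(F,n) = F[X]/(X^n - 1). -/
abbrev CycRing (F : Type*) [Field F] (n : ℕ) := AdjoinRoot (X ^ n - Polynomial.C (1 : F))

/-- The unique representative of degree < n of an element of F[X]/(X^n-1). -/
noncomputable def cycRep {F : Type*} [Field F] {n : ℕ} (f : CycRing F n) : F[X] :=
  if h : n = 0 then 0
  else AdjoinRoot.modByMonicHom (monic_X_pow_sub_C (1 : F) h) f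

/-- Hamming weight of an element of F[X]/(X^n-1): the number of nonzero coefficients of
its representative of degree < n. -/
noncomputable def cycWt {F : Type*} [Field F] {n : ℕ} (f : CycRing F n) : ℕ :=
  (cycRep f).support.card

/-- Minimum distance of a cyclic code (ideal of F[X]/(X^n-1)). -/
noncomputable def cycDist {F : Type*} [Field F] {n : ℕ} (I : Ideal (CycRing F n)) : ℕ :=
  sInf {w | ∃ f ∈ I, f ≠ 0 ∧ cycWt f = w}

/-- Dimension of a cyclic code as an F-vector space. -/
noncomputable def cycDim (F : Type*) [Field F] {n : ℕ} (I : Ideal (CycRing F n)) : ℕ :=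
  Module.finrank F (Submodule.restrictScalars F I)

/-- The invariant μ(F,n). -/
noncomputable def mu (F : Type*) [Field F] (n : ℕ) : ℕ :=
  sInf {w | ∃ f : CycRing F n, f ≠ 0 ∧
    cycDist (Ideal.span {f}) + cycDim F (Ideal.span {f}) = w}

/-- No finite field satisfies the strong uncertainty principle: for every prime power q
(i.e., every finite field F_q) there are infinitely many primes p, with p ∤ q,
such that μ(F_q,p) ≤ p. -/
lemma noSUP_image_eq {α K : Type*} (v : α → K) (u t : Finset α) (h : t ⊆ u) :
    (fun j : (u : Set α) => v j) '' {j : (u : Set α) | (j : α) ∈ t} = v '' (t : Set α) := by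
  ext x
  simp only [Set.mem_image, Set.mem_setOf_eq]
  constructor
  · rintro ⟨⟨j, hj⟩, hjt, rfl⟩; exact ⟨j, hjt, rfl⟩
  · rintro ⟨j, hjt, rfl⟩; exact ⟨⟨j, h hjt⟩, hjt, rfl⟩

lemma noSUP_exists_dep {F : Type*} [Field F] [Fintype F]
    {K : Type*} [AddCommGroup K] [Module F K] [FiniteDimensional F K]
    (hm2 : 2 ≤ Module.finrank F K)
    {n : ℕ} (v : Fin n → K) (hn : Fintype.card F + Module.finrank F K ≤ n) :
    ∃ s : Finset (Fin n), s.card ≤ Module.finrank F K ∧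
      ∃ g : Fin n → F, (∑ i ∈ s, g i • v i = 0) ∧ ∃ i ∈ s, g i ≠ 0 := by
  classical
  set m := Module.finrank F K with hm
  by_contra hcon
  push_neg at hcon
  -- every small subfamily is linearly independent
  have hind : ∀ s : Finset (Fin n), s.card ≤ m →
      LinearIndependent F (fun i : (s : Set (Fin n)) => v i) := by
    intro s hs
    rw [Fintype.linearIndependent_iff]
    intro g hg j
    set g' : Fin n → F := fun i => if h : i ∈ s then g ⟨i, h⟩ else 0 with hg'
    have hsum : ∑ i ∈ s, g' i • v i = 0 := by
      rw [← Finset.sum_attach s (fun i => g' i • v i)]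
      rw [← hg]
      apply Finset.sum_congr rfl
      intro i _
      simp only [hg', dif_pos i.2]
      exact congrArg (· • v ↑i) (congrArg g (Subtype.ext rfl))
    have h0 : g' (↑j : Fin n) = 0 := hcon s hs g' hsum (↑j) j.2
    simpa only [hg', dif_pos (Finset.mem_coe.mp j.2), Subtype.coe_eta] using h0
  -- pick a subset of size m-2
  obtain ⟨t, -, htcard⟩ := Finset.exists_subset_card_eq
    (s := (Finset.univ : Finset (Fin n))) (n := m - 2)
    (by simpa using by omega)
  set V := Submodule.span F (v '' (t : Set (Fin n))) with hV
  have hVrank : Module.finrank F V = m - 2 := by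
    have hli := hind t (by omega)
    have h2 := finrank_span_eq_card hli
    rw [← Set.image_eq_range] at h2
    rw [hV, h2]
    simp [htcard]
  have hQ1 := Submodule.finrank_quotient_add_finrank V
  rw [hVrank, ← hm] at hQ1
  have hQrank : Module.finrank F (K ⧸ V) = 2 := by omega
  set b := Module.finBasisOfFinrankEq F (K ⧸ V) hQrank with hb
  set π := V.mkQ with hπ
  have hnotmem : ∀ w : Fin n, w ∉ t → v w ∉ V := by
    intro w hw hmem
    have hli := hind (insert w t) (by
      rw [Finset.card_insert_of_notMem hw]; omega)
    have himg := noSUP_image_eq v (insert w t) t (Finset.subset_insert w t)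
    have hnm := hli.notMem_span_image
      (s := {j : ((insert w t : Finset (Fin n)) : Set (Fin n)) | (j : Fin n) ∈ t})
      (x := ⟨w, by simp⟩) (by simp [hw])
    rw [himg] at hnm
    exact hnm hmem
  have hπne : ∀ w : Fin n, w ∉ t → π (v w) ≠ 0 := by
    intro w hw h0
    exact hnotmem w hw (by rwa [hπ, Submodule.mkQ_apply, Submodule.Quotient.mk_eq_zero] at h0)
  set Φ : Fin n → Option F := fun w =>
    if (b.repr (π (v w))) 1 = 0 then none
    else some ((b.repr (π (v w))) 0 / (b.repr (π (v w))) 1) with hΦ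
  have hprop : ∀ w w', w ∉ t → w' ∉ t → Φ w = Φ w' → ∃ c : F, π (v w') = c • π (v w) := by
    intro w w' hw hw' heq
    set u := b.repr (π (v w)) with hu
    set u' := b.repr (π (v w')) with hu'
    have hx0 : u ≠ 0 := by
      rw [hu]
      exact fun h => hπne w hw (by simpa using congrArg b.repr.symm h)
    have hx0' : u' ≠ 0 := by
      rw [hu']
      exact fun h => hπne w' hw' (by simpa using congrArg b.repr.symm h)
    by_cases h1 : u 1 = 0
    · have hΦw : Φ w = none := by
        simp only [hΦ]; rw [← hu, if_pos h1]
      have h1' : u' 1 = 0 := by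
        by_contra h1'
        have hΦw' : Φ w' = some (u' 0 / u' 1) := by
          simp only [hΦ]; rw [← hu', if_neg h1']
        rw [hΦw, hΦw'] at heq
        simp at heq
      have hu0 : u 0 ≠ 0 := by
        intro h0
        apply hx0
        ext i
        fin_cases i
        · exact h0
        · exact h1
      refine ⟨u' 0 / u 0, ?_⟩
      apply b.repr.injective
      rw [map_smul, ← hu, ← hu']
      ext i
      fin_cases i
      · show u' 0 = (u' 0 / u 0) * u 0
        rw [div_mul_cancel₀ _ hu0]
      · show u' 1 = (u' 0 / u 0) * u 1
        rw [h1, h1', mul_zero]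
    · have hΦw : Φ w = some (u 0 / u 1) := by
        simp only [hΦ]; rw [← hu, if_neg h1]
      have h1' : u' 1 ≠ 0 := by
        intro h1'
        have hΦw' : Φ w' = none := by
          simp only [hΦ]; rw [← hu', if_pos h1']
        rw [hΦw, hΦw'] at heq
        simp at heq
      have hΦw' : Φ w' = some (u' 0 / u' 1) := by
        simp only [hΦ]; rw [← hu', if_neg h1']
      rw [hΦw, hΦw'] at heq
      have hratio : u 0 / u 1 = u' 0 / u' 1 := Option.some.inj heq
      have hcross : u 0 * u' 1 = u' 0 * u 1 := (div_eq_div_iff h1 h1').mp hratio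
      refine ⟨u' 1 / u 1, ?_⟩
      apply b.repr.injective
      rw [map_smul, ← hu, ← hu']
      ext i
      fin_cases i
      · show u' 0 = (u' 1 / u 1) * u 0
        field_simp
        linear_combination -hcross
      · show u' 1 = (u' 1 / u 1) * u 1
        rw [div_mul_cancel₀ _ h1]
  have hinj : Set.InjOn Φ ↑(tᶜ) := by
    intro w hw w' hw' heq
    by_contra hne
    have hwt : w ∉ t := by simpa using hw
    have hw't : w' ∉ t := by simpa using hw'
    obtain ⟨c, hc⟩ := hprop w w' hwt hw't heq
    have hmemV : v w' - c • v w ∈ V := by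
      rw [← Submodule.Quotient.mk_eq_zero]
      have hz : π (v w' - c • v w) = 0 := by
        rw [map_sub, map_smul, hc, sub_self]
      simpa [hπ] using hz
    have hsub : v w' ∈ Submodule.span F (v '' ((insert w t : Finset (Fin n)) : Set (Fin n))) := by
      have h1 : v w ∈ Submodule.span F (v '' ((insert w t : Finset (Fin n)) : Set (Fin n))) :=
        Submodule.subset_span ⟨w, by simp, rfl⟩
      have h2 : v w' - c • v w ∈ Submodule.span F
          (v '' ((insert w t : Finset (Fin n)) : Set (Fin n))) := by
        refine Submodule.span_mono (Set.image_mono ?_) hmemV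
        intro x hx
        simp only [Finset.coe_insert, Set.mem_insert_iff]
        exact Or.inr hx
      have h3 := Submodule.add_mem _ (Submodule.smul_mem _ c h1) h2
      simpa using h3
    have hli := hind (insert w' (insert w t)) (by
      calc (insert w' (insert w t)).card ≤ (insert w t).card + 1 := Finset.card_insert_le _ _
        _ ≤ (t.card + 1) + 1 := by
            have := Finset.card_insert_le w t; omega
        _ ≤ m := by omega)
    have himg := noSUP_image_eq v (insert w' (insert w t)) (insert w t)
      (Finset.subset_insert _ _)
    have hnm := hli.notMem_span_image
      (s := {j : ((insert w' (insert w t) : Finset (Fin n)) : Set (Fin n)) |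
        (j : Fin n) ∈ insert w t})
      (x := ⟨w', by simp⟩)
      (by
        simp only [Set.mem_setOf_eq, Finset.mem_insert, not_or]
        exact ⟨fun h => hne h.symm, hw't⟩)
    rw [himg] at hnm
    exact hnm hsub
  have hcount := Finset.card_le_card_of_injOn Φ
    (fun x _ => Finset.mem_univ (Φ x)) hinj
  rw [Finset.card_compl, Fintype.card_fin, htcard, Finset.card_univ,
    Fintype.card_option] at hcount
  omega

lemma noSUP_mu_le {F : Type*} [Field F] [Fintype F] {q p : ℕ} (hq : Fintype.card F = q)
    (hp : p.Prime) (hp2q : 2 * q < p) (hqk : q ^ (p / 2) ≡ 1 [MOD p]) :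
    mu F p ≤ p := by
  classical
  haveI : Fact p.Prime := ⟨hp⟩
  have hq2 : 2 ≤ q := hq ▸ Fintype.one_lt_card
  have hp5 : 5 ≤ p := by
    rcases hp.eq_one_or_self_of_dvd 1 (one_dvd p) with h | h <;> omega
  have hpodd : p % 2 = 1 := Nat.odd_iff.mp (hp.odd_of_ne_two (by omega))
  set k := p / 2 with hk
  have hk1 : 1 ≤ k := by omega
  -- the polynomial X^p - 1 and the geometric sum
  have hXp0 : (X : F[X]) ^ p - C 1 ≠ 0 := X_pow_sub_C_ne_zero (by omega) 1
  set Ψ : F[X] := ∑ i ∈ Finset.range p, X ^ i with hΨ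
  have hΨmul : Ψ * (X - 1) = X ^ p - C 1 := by
    rw [hΨ, geom_sum_mul]
    simp
  have hΨdvd : Ψ ∣ X ^ p - C 1 := ⟨X - 1, hΨmul.symm⟩
  have hΨ0 : Ψ ≠ 0 := fun h => hXp0 (by rw [← hΨmul, h, zero_mul])
  have hΨu : ¬IsUnit Ψ := by
    intro hu
    have hd : Ψ.degree = 0 := degree_eq_zero_of_isUnit hu
    have : ((X : F[X]) ^ p - C 1).degree = 1 := by
      rw [← hΨmul, degree_mul, hd, zero_add]
      simpa using degree_X_sub_C (1 : F)
    rw [degree_X_pow_sub_C (by omega) (1 : F)] at this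
    exact absurd (by exact_mod_cast this) (by omega)
  obtain ⟨g, hgirr, hgdvd⟩ := WfDvdMonoid.exists_irreducible_factor hΨu hΨ0
  have hgX : g ∣ X ^ p - C 1 := hgdvd.trans hΨdvd
  haveI : Fact (Irreducible g) := ⟨hgirr⟩
  set K := AdjoinRoot g with hK
  set r : K := AdjoinRoot.root g with hr
  have hg0 : g ≠ 0 := hgirr.ne_zero
  set pbK := AdjoinRoot.powerBasis hg0 with hpbK
  haveI : Module.Finite F K := Module.Finite.of_basis pbK.basis
  set m := g.natDegree with hm
  have hm1 : 1 ≤ m := hgirr.natDegree_pos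
  have hmK : Module.finrank F K = m := by
    rw [pbK.finrank]
    rfl
  -- r ^ p = 1
  have hrp : r ^ p = 1 := by
    have h0 : (aeval r) ((X : F[X]) ^ p - C 1) = 0 := by
      rw [AdjoinRoot.aeval_eq, AdjoinRoot.mk_eq_zero.mpr hgX]
    rw [map_sub, map_pow, aeval_X, aeval_C] at h0
    have : r ^ p = algebraMap F K 1 := by linear_combination h0
    simpa using this
  -- characteristic facts
  set l := ringChar F with hl
  haveI hchF : CharP F l := ringChar.charP F
  have hlprime : l.Prime := CharP.char_is_prime F l
  haveI : Fact l.Prime := ⟨hlprime⟩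
  have hlq : l ∣ q := by
    have h0 : ((q : ℕ) : F) = 0 := by rw [← hq]; exact FiniteField.cast_card_eq_zero F
    exact (CharP.cast_eq_zero_iff F l q).mp h0
  haveI hchK : CharP K l := charP_of_injective_algebraMap (algebraMap F K).injective l
  -- r ≠ 1
  have hΨr : (aeval r) Ψ = 0 := by
    rw [AdjoinRoot.aeval_eq, AdjoinRoot.mk_eq_zero.mpr hgdvd]
  have hr1 : r ≠ 1 := by
    intro h1
    rw [hΨ] at hΨr
    simp only [map_sum, map_pow, aeval_X, h1, one_pow, Finset.sum_const,
      Finset.card_range, nsmul_eq_mul, mul_one] at hΨr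
    have hlp : l ∣ p := (CharP.cast_eq_zero_iff K l p).mp hΨr
    have : l = p := (Nat.prime_dvd_prime_iff_eq hlprime hp).mp hlp
    have : p ∣ q := this ▸ hlq
    have := Nat.le_of_dvd (by omega) this
    omega
  have hordr : orderOf r = p := orderOf_eq_prime hrp hr1
  -- q = l ^ e
  obtain ⟨e, -, hcard⟩ := FiniteField.card F l
  have hqle : q = l ^ (e : ℕ) := by rw [← hq, hcard]
  -- Frobenius: every element of K satisfies x ^ (q ^ k) = x
  have hqk1 : q ^ k % p = 1 := by
    have := hqk
    unfold Nat.ModEq at this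
    rwa [Nat.one_mod_eq_one.mpr (by omega)] at this
  have hrq : r ^ q ^ k = r := by
    have hdm := Nat.div_add_mod (q ^ k) p
    rw [hqk1] at hdm
    calc r ^ q ^ k = r ^ (p * (q ^ k / p) + 1) := by rw [hdm]
      _ = (r ^ p) ^ (q ^ k / p) * r := by rw [pow_add, pow_mul, pow_one]
      _ = r := by rw [hrp, one_pow, one_mul]
  have hfrob : ∀ x : K, x ^ q ^ k = x := by
    have hpow : ∀ x : K, x ^ q ^ k = iterateFrobenius K l (e * k) x := by
      intro x
      rw [iterateFrobenius_def, hqle, ← pow_mul]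
    set φ : K →ₐ[F] K :=
      { toRingHom := iterateFrobenius K l (e * k)
        commutes' := by
          intro a
          show (iterateFrobenius K l ((e : ℕ) * k)) ((algebraMap F K) a) = (algebraMap F K) a
          rw [← hpow (algebraMap F K a), ← map_pow]
          congr 1
          rw [← hq]
          exact FiniteField.pow_card_pow k a } with hφ
    have hφr : φ r = r := by
      rw [hφ]
      show iterateFrobenius K l (e * k) r = r
      rw [← hpow r, hrq]
    intro x
    obtain ⟨f, rfl⟩ := AdjoinRoot.mk_surjective x
    rw [← AdjoinRoot.aeval_eq, hpow]
    show φ ((aeval r) f) = (aeval r) f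
    rw [← aeval_algHom_apply, hφr]
  -- counting roots of X^(q^k) - X : every element of K is a root
  letI : Fintype K := Module.fintypeOfFintype pbK.basis
  have hcardK : Fintype.card K = q ^ m := by
    rw [Module.card_eq_pow_finrank (K := F) (V := K), hq, hmK]
  have hqk_1 : 1 < q ^ k := Nat.one_lt_pow (by omega) (by omega)
  have hcardle : Fintype.card K ≤ q ^ k := by
    set P : K[X] := X ^ q ^ k - X with hP
    have hdeg : P.degree = (q ^ k : ℕ) := by
      rw [hP, degree_sub_eq_left_of_degree_lt, degree_X_pow]
      rw [degree_X_pow, degree_X]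
      exact_mod_cast hqk_1
    have hP0 : P ≠ 0 := fun h => by
      rw [h, degree_zero] at hdeg
      have : ((q ^ k : ℕ) : WithBot ℕ) ≠ ⊥ := WithBot.coe_ne_bot
      exact this hdeg.symm
    have hsubset : (Finset.univ : Finset K) ⊆ P.roots.toFinset := by
      intro x _
      rw [Multiset.mem_toFinset, mem_roots hP0]
      show eval x P = 0
      rw [hP]
      simp [hfrob x]
    calc Fintype.card K = (Finset.univ : Finset K).card := rfl
      _ ≤ P.roots.toFinset.card := Finset.card_le_card hsubset
      _ ≤ Multiset.card P.roots := P.roots.toFinset_card_le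
      _ ≤ P.natDegree := P.card_roots'
      _ = q ^ k := natDegree_eq_of_degree_eq_some hdeg
  have hmk : m ≤ k := by
    have hle : q ^ m ≤ q ^ k := by rw [← hcardK]; exact hcardle
    exact (Nat.pow_le_pow_iff_right (by omega)).mp hle
  -- m ≥ 2
  have hm2 : 2 ≤ m := by
    rcases Nat.lt_or_ge m 2 with hlt | hge
    · exfalso
      have hmeq : m = 1 := by omega
      have hr0 : r ≠ 0 := by
        intro h0
        rw [h0, zero_pow (by omega)] at hrp
        exact zero_ne_one hrp
      have hp1 : p - 1 + 1 = p := by omega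
      set u : Kˣ := Units.mkOfMulEqOne r (r ^ (p - 1)) (by
        rw [← pow_succ', hp1, hrp]) with hu
      have hou : orderOf u = p := by
        rw [← orderOf_units]
        exact hordr
      have hdvd : p ∣ Nat.card Kˣ := hou ▸ orderOf_dvd_natCard u
      rw [Nat.card_units, Nat.card_eq_fintype_card, hcardK, hmeq, pow_one] at hdvd
      have := Nat.le_of_dvd (by omega) hdvd
      omega
    · exact hge
  -- apply the dependency lemma to the powers of r
  have hdep := noSUP_exists_dep (F := F) (K := K) (by rw [hmK]; exact hm2)
    (fun i : Fin p => r ^ (i : ℕ)) (by rw [hq, hmK]; omega)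
  rw [hmK] at hdep
  obtain ⟨s, hscard, gc, hgsum, i0, hi0s, hi0⟩ := hdep
  -- build the low-weight polynomial
  set c : F[X] := ∑ i ∈ s, C (gc i) * X ^ (i : ℕ) with hc
  have haeval : (aeval r) c = 0 := by
    have hsum : (aeval r) c = ∑ i ∈ s, gc i • r ^ (i : ℕ) := by
      rw [hc, map_sum]
      refine Finset.sum_congr rfl fun i _ => ?_
      rw [map_mul, aeval_C, map_pow, aeval_X, Algebra.smul_def]
    rw [hsum]
    exact hgsum
  have hci0 : c.coeff (i0 : ℕ) = gc i0 := by
    rw [hc, finset_sum_coeff]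
    rw [Finset.sum_eq_single_of_mem i0 hi0s]
    · simp [coeff_C_mul, coeff_X_pow]
    · intro j hj hji
      rw [coeff_C_mul, coeff_X_pow, if_neg (fun h => hji (Fin.ext h.symm)), mul_zero]
  have hcne : c ≠ 0 := fun h => hi0 (by rw [← hci0, h, coeff_zero])
  have hsupp : c.support ⊆ s.image (fun i : Fin p => (i : ℕ)) := by
    intro nn hnn
    by_contra hnot
    apply mem_support_iff.mp hnn
    rw [hc, finset_sum_coeff]
    refine Finset.sum_eq_zero fun j hj => ?_
    have hne : (j : ℕ) ≠ nn := fun h => hnot (Finset.mem_image.mpr ⟨j, hj, h⟩)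
    rw [coeff_C_mul, coeff_X_pow, if_neg (fun h => hne h.symm), mul_zero]
  have hdegc : c.degree < (p : ℕ) := by
    rw [degree_lt_iff_coeff_zero]
    intro nn hnn
    by_contra hne
    have := hsupp (mem_support_iff.mpr hne)
    obtain ⟨j, -, hj⟩ := Finset.mem_image.mp this
    have := j.isLt
    omega
  have hgc : g ∣ c := AdjoinRoot.mk_eq_zero.mp (by rw [← AdjoinRoot.aeval_eq]; exact haeval)
  -- now work in the cyclic ring
  set XP : F[X] := X ^ p - C 1 with hXP
  have hXPm : XP.Monic := monic_X_pow_sub_C 1 (by omega)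
  have hXPdeg : XP.degree = (p : ℕ) := degree_X_pow_sub_C (by omega) 1
  set pbR := AdjoinRoot.powerBasis (hXP ▸ hXp0) with hpbR
  haveI : Module.Finite F (CycRing F p) := Module.Finite.of_basis pbR.basis
  have hrankR : Module.finrank F (CycRing F p) = p := by
    rw [pbR.finrank]
    show XP.natDegree = p
    rw [hXP, natDegree_X_pow_sub_C]
  set fgen : CycRing F p := AdjoinRoot.mk XP g with hfgen
  have hdeggX : g.degree < XP.degree := by
    rw [hXPdeg, degree_eq_natDegree hg0, ← hm]
    exact_mod_cast (by omega : m < p)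
  have hfgen0 : fgen ≠ 0 := by
    rw [hfgen, Ne, AdjoinRoot.mk_eq_zero]
    intro hdvd
    exact hg0 (eq_zero_of_dvd_of_degree_lt hdvd hdeggX)
  set I : Ideal (CycRing F p) := Ideal.span {fgen} with hI
  set cbar : CycRing F p := AdjoinRoot.mk XP c with hcbar
  have hmem : cbar ∈ I := by
    rw [hI, Ideal.mem_span_singleton]
    obtain ⟨h, hch⟩ := hgc
    exact ⟨AdjoinRoot.mk XP h, by rw [hcbar, hch, map_mul]⟩
  have hcbar0 : cbar ≠ 0 := by
    rw [hcbar, Ne, AdjoinRoot.mk_eq_zero]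
    intro hdvd
    exact hcne (eq_zero_of_dvd_of_degree_lt hdvd (by rw [hXPdeg]; exact hdegc))
  have hwt : cycWt cbar ≤ m := by
    have hrep : cycRep cbar = c := by
      rw [cycRep, dif_neg (by omega : ¬ p = 0)]
      rw [hcbar]
      rw [AdjoinRoot.modByMonicHom_mk]
      exact (modByMonic_eq_self_iff (monic_X_pow_sub_C 1 (by omega))).mpr
        (by rw [degree_X_pow_sub_C (by omega) 1]; exact hdegc)
    rw [cycWt, hrep]
    calc c.support.card ≤ (s.image (fun i : Fin p => (i : ℕ))).card :=
          Finset.card_le_card hsupp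
      _ ≤ s.card := Finset.card_image_le
      _ ≤ m := hscard
  have hdist : cycDist I ≤ m := le_trans (Nat.sInf_le ⟨cbar, hmem, hcbar0, rfl⟩) hwt
  -- the evaluation map and the dimension bound
  have hXPr : (aeval r) XP = 0 := by
    rw [hXP, map_sub, map_pow, aeval_X, aeval_C, hrp]
    simp
  set ev : CycRing F p →ₐ[F] K := AdjoinRoot.liftAlgHom XP (Algebra.ofId F K) r hXPr with hev
  have hsurj : Function.Surjective ev := by
    intro y
    obtain ⟨h, rfl⟩ := AdjoinRoot.mk_surjective y
    exact ⟨AdjoinRoot.mk XP h, by rw [hev]; exact AdjoinRoot.aeval_eq h⟩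
  set evL := ev.toLinearMap with hevL
  have hrange : LinearMap.range evL = ⊤ := LinearMap.range_eq_top.mpr hsurj
  have hrank := LinearMap.finrank_range_add_finrank_ker evL
  rw [hrange, finrank_top, hmK, hrankR] at hrank
  have hIker : Submodule.restrictScalars F I ≤ LinearMap.ker evL := by
    intro x hx
    have hx' : x ∈ I := hx
    rw [hI, Ideal.mem_span_singleton] at hx'
    obtain ⟨y, rfl⟩ := hx'
    rw [LinearMap.mem_ker]
    show ev (fgen * y) = 0
    have hz : ev fgen = 0 := by
      rw [hev, hfgen]
      exact (AdjoinRoot.aeval_eq g).trans AdjoinRoot.mk_self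
    rw [map_mul, hz, zero_mul]
  have hdim : cycDim F I ≤ p - m := by
    have hle := Submodule.finrank_mono hIker
    have : Module.finrank F (LinearMap.ker evL) = p - m := by omega
    rw [this] at hle
    exact hle
  -- conclude
  have hmu : mu F p ≤ cycDist I + cycDim F I := Nat.sInf_le ⟨fgen, hfgen0, rfl⟩
  have : cycDist I + cycDim F I ≤ p := by omega
  omega

lemma noSUP_exists_good_prime {F : Type*} [Field F] [Fintype F] {q : ℕ}
    (hq : Fintype.card F = q) (N : ℕ) :
    ∃ p : ℕ, p.Prime ∧ N < p ∧ 2 * q < p ∧ q ^ (p / 2) ≡ 1 [MOD p] := by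
  have hq2 : 2 ≤ q := hq ▸ Fintype.one_lt_card
  obtain ⟨p, hp, hpN, hpmod⟩ :=
    Nat.exists_prime_gt_modEq_one (k := 4 * q) (max N (2 * q)) (by omega)
  haveI : Fact p.Prime := ⟨hp⟩
  have hN : N < p := lt_of_le_of_lt (le_max_left _ _) hpN
  have h2q : 2 * q < p := lt_of_le_of_lt (le_max_right _ _) hpN
  have hp2 : p ≠ 2 := by omega
  have hpodd : p % 2 = 1 := Nat.odd_iff.mp (hp.odd_of_ne_two hp2)
  have hp4 : p % 4 = 1 := by
    have h4 : p ≡ 1 [MOD 4] := hpmod.of_dvd ⟨q, rfl⟩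
    unfold Nat.ModEq at h4
    omega
  obtain ⟨l, -, e, hl, hcard⟩ := FiniteField.card' (K := F)
  have hqle : q = l ^ (e : ℕ) := by rw [← hq, hcard]
  have hldvd : l ∣ q := hqle ▸ dvd_pow_self l e.ne_zero
  have hlle : l ≤ q := Nat.le_of_dvd (by omega) hldvd
  have hsql : IsSquare ((l : ZMod p)) := by
    rcases eq_or_ne l 2 with rfl | hl2
    · have h8 : (8 : ℕ) ∣ 4 * q := by
        obtain ⟨d, hd⟩ := hldvd
        omega
      have hp8 : p % 8 = 1 := by
        have h8' : p ≡ 1 [MOD 8] := hpmod.of_dvd h8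
        unfold Nat.ModEq at h8'
        omega
      exact (ZMod.exists_sq_eq_two_iff hp2).mpr (Or.inl hp8)
    · haveI : Fact l.Prime := ⟨hl⟩
      have hlodd : Odd l := hl.odd_of_ne_two hl2
      have hpl : p % l = 1 := by
        have hdl : l ∣ 4 * q := by
          obtain ⟨d, hd⟩ := hldvd
          exact ⟨4 * d, by rw [hd]; ring⟩
        have hml : p ≡ 1 [MOD l] := hpmod.of_dvd hdl
        unfold Nat.ModEq at hml
        rwa [Nat.one_mod_eq_one.mpr (by have := hl.two_le; omega)] at hml
      have hlp1 : legendreSym p l = 1 := by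
        rw [jacobiSym.legendreSym.to_jacobiSym]
        rw [jacobiSym.quadratic_reciprocity_one_mod_four' hlodd hp4]
        have hml : ((p : ℤ)) % l = ((1 : ℤ)) % l := by
          have h1 : (1 : ℕ) % l = 1 := Nat.one_mod_eq_one.mpr (by have := hl.two_le; omega)
          norm_cast
          rw [hpl, h1]
        rw [jacobiSym.mod_left' hml, jacobiSym.one_left]
      have hne0 : ((l : ZMod p)) ≠ 0 := by
        rw [Ne, ZMod.natCast_eq_zero_iff]
        intro hdvd
        have := Nat.le_of_dvd hl.pos hdvd
        omega
      exact (legendreSym.eq_one_iff' p hne0).mp hlp1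
  have hsq : IsSquare ((q : ZMod p)) := by
    obtain ⟨b, hb⟩ := hsql
    refine ⟨b ^ (e : ℕ), ?_⟩
    rw [hqle]
    push_cast
    rw [hb, mul_pow]
  obtain ⟨b, hb⟩ := hsq
  have hqne0 : ((q : ZMod p)) ≠ 0 := by
    rw [Ne, ZMod.natCast_eq_zero_iff]
    intro hdvd
    have := Nat.le_of_dvd (by omega) hdvd
    omega
  have hbne0 : b ≠ 0 := fun h => hqne0 (by rw [hb, h, mul_zero])
  have hpow : ((q : ZMod p)) ^ (p / 2) = 1 := by
    have h2 : 2 * (p / 2) = p - 1 := by omega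
    rw [hb, ← sq, ← pow_mul, h2]
    exact ZMod.pow_card_sub_one_eq_one hbne0
  refine ⟨p, hp, hN, h2q, ?_⟩
  have hcast : ((q ^ (p / 2) : ℕ) : ZMod p) = ((1 : ℕ) : ZMod p) := by
    push_cast
    rw [hpow]
  exact (ZMod.natCast_eq_natCast_iff _ _ _).mp hcast

theorem no_strong_UP (q : ℕ) (F : Type*) [Field F] [Fintype F]
    (hq : Fintype.card F = q) :
    {p : ℕ | p.Prime ∧ ¬ p ∣ q ∧ mu F p ≤ p}.Infinite := by
  have hq2 : 2 ≤ q := hq ▸ Fintype.one_lt_card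
  apply Set.infinite_of_forall_exists_gt
  intro N
  obtain ⟨p, hp, hN, h2q, hqk⟩ := noSUP_exists_good_prime hq N
  refine ⟨p, ⟨hp, ?_, noSUP_mu_le hq hp h2q hqk⟩, hN⟩
  intro hdvd
  have := Nat.le_of_dvd (by omega) hdvd
  omega
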